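/- Let F_q be a finite field and let c₁, c₂ be two distinct nonzero elements of F_q with δ := c₁² − c₁c₂ + c₂² ≠ 0. Let A₁ = [[c₁, 0], [0, c₂]] ∈ M₂(F_q). Then |D_{A₁}(F_q)| = q + 3, and D_{A₁}(F_q) equals the union of the four points {[[0,0],[0,0]], [[c₁,0],[0,0]], [[0,0],[0,c₂]], [[c₁,0],[0,c₂]]} with the family E₃ = {[[c₂²/(c₂−c₁), a],[b, c₁²/(c₁−c₂)]] : a, b ∈ F_q^× and ab = −c₁c₂δ/(c₁−c₂)²}. -/

import Mathlib

private lemma ybe_iff {F : Type*} [Field F] (c₁ c₂ x y z w : F) :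
    !![x,y;z,w] * !![c₁, 0; 0, c₂] * !![x,y;z,w] = !![c₁, 0; 0, c₂] * !![x,y;z,w] * !![c₁, 0; 0, c₂] ↔
    (c₁*x^2 + c₂*y*z = c₁^2*x ∧ y*(c₁*x + c₂*w) = c₁*c₂*y ∧
     z*(c₁*x + c₂*w) = c₁*c₂*z ∧ c₁*y*z + c₂*w^2 = c₂^2*w) := by
  rw [← Matrix.ext_iff]
  simp only [Fin.forall_fin_two, Matrix.mul_apply, Fin.sum_univ_two, Matrix.cons_val', Matrix.cons_val_zero,
    Matrix.cons_val_one, Matrix.head_cons, Matrix.empty_val', Matrix.cons_val_fin_one, Matrix.head_fin_const, Matrix.of_apply]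
  constructor
  · rintro ⟨⟨h1,h2⟩,h3,h4⟩
    exact ⟨by linear_combination h1, by linear_combination h2, by linear_combination h3, by linear_combination h4⟩
  · rintro ⟨h1,h2,h3,h4⟩
    exact ⟨⟨by linear_combination h1, by linear_combination h2⟩, by linear_combination h3, by linear_combination h4⟩

private lemma entries_eq {F : Type*} [Field F] (X : Matrix (Fin 2) (Fin 2) F) :
    X = !![X 0 0, X 0 1; X 1 0, X 1 1] := by
  ext i j; fin_cases i <;> fin_cases j <;> rfl

private lemma solve {F : Type*} [Field F] (c₁ c₂ : F)
    (hc₁ : c₁ ≠ 0) (hc₂ : c₂ ≠ 0) (hne : c₁ ≠ c₂)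
    (hδ : c₁ ^ 2 - c₁ * c₂ + c₂ ^ 2 ≠ 0) (x y z w : F)
    (h1 : c₁*x^2 + c₂*y*z = c₁^2*x) (h2 : y*(c₁*x + c₂*w) = c₁*c₂*y)
    (h3 : z*(c₁*x + c₂*w) = c₁*c₂*z) (h4 : c₁*y*z + c₂*w^2 = c₂^2*w) :
    (y = 0 ∧ z = 0 ∧ (x = 0 ∨ x = c₁) ∧ (w = 0 ∨ w = c₂)) ∨
    (y ≠ 0 ∧ z ≠ 0 ∧ y * z = -(c₁ * c₂ * (c₁ ^ 2 - c₁ * c₂ + c₂ ^ 2)) / (c₁ - c₂) ^ 2 ∧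
      x = c₂ ^ 2 / (c₂ - c₁) ∧ w = c₁ ^ 2 / (c₁ - c₂)) := by
  have hd : c₁ - c₂ ≠ 0 := sub_ne_zero.2 hne
  have hd' : c₂ - c₁ ≠ 0 := sub_ne_zero.2 (Ne.symm hne)
  have hk : -(c₁ * c₂ * (c₁ ^ 2 - c₁ * c₂ + c₂ ^ 2)) / (c₁ - c₂) ^ 2 ≠ 0 := by
    apply div_ne_zero _ (pow_ne_zero _ hd)
    exact neg_ne_zero.2 (mul_ne_zero (mul_ne_zero hc₁ hc₂) hδ)
  by_cases hy : y = 0 <;> by_cases hz : z = 0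
  · left
    refine ⟨hy, hz, ?_, ?_⟩
    · rcases mul_eq_zero.1 (show x * (x - c₁) = 0 from
        mul_left_cancel₀ hc₁ (by subst hy; linear_combination h1)) with h | h
      · exact Or.inl h
      · exact Or.inr (sub_eq_zero.1 h)
    · rcases mul_eq_zero.1 (show w * (w - c₂) = 0 from
        mul_left_cancel₀ hc₂ (by subst hz; linear_combination h4)) with h | h
      · exact Or.inl h
      · exact Or.inr (sub_eq_zero.1 h)
  all_goals {
    have h5 : c₁*x + c₂*w = c₁*c₂ := by
      first
      | exact mul_left_cancel₀ hz (by linear_combination h3)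
      | exact mul_left_cancel₀ hy (by linear_combination h2)
    have hkey : c₁ * (x * (c₁-c₂)^2) = c₁ * (c₂^2*(c₂-c₁)) := by
      linear_combination (-c₁)*h1 + c₂*h4 + (c₂^2 + c₁*x - c₂*w - c₁*c₂)*h5
    have hkey2 : x * (c₁-c₂)^2 = c₂^2*(c₂-c₁) := mul_left_cancel₀ hc₁ hkey
    have hx : x = c₂ ^ 2 / (c₂ - c₁) := by
      rw [eq_div_iff hd']
      exact mul_right_cancel₀ hd' (by linear_combination hkey2)
    have hw : w = c₁ ^ 2 / (c₁ - c₂) := by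
      rw [eq_div_iff hd]
      exact mul_right_cancel₀ (mul_ne_zero hc₂ hd')
        (by linear_combination (-(c₁-c₂)^2) * h5 + c₁ * hkey2)
    have hyz : y * z = -(c₁ * c₂ * (c₁ ^ 2 - c₁ * c₂ + c₂ ^ 2)) / (c₁ - c₂) ^ 2 := by
      rw [eq_div_iff (pow_ne_zero 2 hd)]
      refine mul_right_cancel₀ (mul_ne_zero hc₂ hd') ?_
      have h1' := h1
      rw [hx] at h1'
      field_simp at h1'
      linear_combination (c₂*(c₂-c₁)) * h1'
    first
    | exact absurd hyz (by rw [hy, zero_mul]; exact fun h => hk h.symm)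
    | exact absurd hyz (by rw [hz, mul_zero]; exact fun h => hk h.symm)
    | exact Or.inr ⟨hy, hz, hyz, hx, hw⟩
  }

theorem stmt_8 {F : Type*} [Field F] [Fintype F] (c₁ c₂ : F)
    (hc₁ : c₁ ≠ 0) (hc₂ : c₂ ≠ 0) (hne : c₁ ≠ c₂)
    (hδ : c₁ ^ 2 - c₁ * c₂ + c₂ ^ 2 ≠ 0) :
    Nat.card {X : Matrix (Fin 2) (Fin 2) F |
        X * !![c₁, 0; 0, c₂] * X = !![c₁, 0; 0, c₂] * X * !![c₁, 0; 0, c₂]} =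
      Fintype.card F + 3 ∧
    {X : Matrix (Fin 2) (Fin 2) F |
        X * !![c₁, 0; 0, c₂] * X = !![c₁, 0; 0, c₂] * X * !![c₁, 0; 0, c₂]} =
      ({!![0, 0; 0, 0], !![c₁, 0; 0, 0], !![0, 0; 0, c₂], !![c₁, 0; 0, c₂]} :
          Set (Matrix (Fin 2) (Fin 2) F)) ∪
        {X : Matrix (Fin 2) (Fin 2) F | ∃ a b : F, a ≠ 0 ∧ b ≠ 0 ∧
          a * b = -(c₁ * c₂ * (c₁ ^ 2 - c₁ * c₂ + c₂ ^ 2)) / (c₁ - c₂) ^ 2 ∧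
          X = !![c₂ ^ 2 / (c₂ - c₁), a; b, c₁ ^ 2 / (c₁ - c₂)]} := by
  have hd : c₁ - c₂ ≠ 0 := sub_ne_zero.2 hne
  have hd' : c₂ - c₁ ≠ 0 := sub_ne_zero.2 (Ne.symm hne)
  have hk : -(c₁ * c₂ * (c₁ ^ 2 - c₁ * c₂ + c₂ ^ 2)) / (c₁ - c₂) ^ 2 ≠ 0 := by
    apply div_ne_zero _ (pow_ne_zero _ hd)
    exact neg_ne_zero.2 (mul_ne_zero (mul_ne_zero hc₁ hc₂) hδ)
  have hseteq : {X : Matrix (Fin 2) (Fin 2) F |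
        X * !![c₁, 0; 0, c₂] * X = !![c₁, 0; 0, c₂] * X * !![c₁, 0; 0, c₂]} =
      ({!![0, 0; 0, 0], !![c₁, 0; 0, 0], !![0, 0; 0, c₂], !![c₁, 0; 0, c₂]} :
          Set (Matrix (Fin 2) (Fin 2) F)) ∪
        {X : Matrix (Fin 2) (Fin 2) F | ∃ a b : F, a ≠ 0 ∧ b ≠ 0 ∧
          a * b = -(c₁ * c₂ * (c₁ ^ 2 - c₁ * c₂ + c₂ ^ 2)) / (c₁ - c₂) ^ 2 ∧
          X = !![c₂ ^ 2 / (c₂ - c₁), a; b, c₁ ^ 2 / (c₁ - c₂)]} := by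
    ext X
    simp only [Set.mem_setOf_eq, Set.mem_union, Set.mem_insert_iff, Set.mem_singleton_iff]
    constructor
    · intro h
      rw [entries_eq X] at h
      obtain ⟨h1, h2, h3, h4⟩ := (ybe_iff c₁ c₂ _ _ _ _).1 h
      rcases solve c₁ c₂ hc₁ hc₂ hne hδ _ _ _ _ h1 h2 h3 h4 with
        ⟨hy, hz, hx | hx, hw | hw⟩ | ⟨hy, hz, hyz, hx, hw⟩
      · exact Or.inl (Or.inl (by rw [entries_eq X, hx, hy, hz, hw]))
      · exact Or.inl (Or.inr (Or.inr (Or.inl (by rw [entries_eq X, hx, hy, hz, hw]))))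
      · exact Or.inl (Or.inr (Or.inl (by rw [entries_eq X, hx, hy, hz, hw])))
      · exact Or.inl (Or.inr (Or.inr (Or.inr (by rw [entries_eq X, hx, hy, hz, hw]))))
      · refine Or.inr ⟨X 0 1, X 1 0, hy, hz, hyz, ?_⟩
        conv_lhs => rw [entries_eq X]
        rw [hx, hw]
    · rintro ((rfl | rfl | rfl | rfl) | ⟨a, b, ha, hb, hab, rfl⟩)
      · refine (ybe_iff c₁ c₂ _ _ _ _).2 ⟨by ring, by ring, by ring, by ring⟩
      · refine (ybe_iff c₁ c₂ _ _ _ _).2 ⟨by ring, by ring, by ring, by ring⟩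
      · refine (ybe_iff c₁ c₂ _ _ _ _).2 ⟨by ring, by ring, by ring, by ring⟩
      · refine (ybe_iff c₁ c₂ _ _ _ _).2 ⟨by ring, by ring, by ring, by ring⟩
      · have hp : (c₂ ^ 2 / (c₂ - c₁)) * (c₂ - c₁) = c₂ ^ 2 := div_mul_cancel₀ _ hd'
        have hq : (c₁ ^ 2 / (c₁ - c₂)) * (c₁ - c₂) = c₁ ^ 2 := div_mul_cancel₀ _ hd
        have hab' : a * b * (c₁ - c₂) ^ 2 = -(c₁ * c₂ * (c₁ ^ 2 - c₁ * c₂ + c₂ ^ 2)) := by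
          rw [hab]; exact div_mul_cancel₀ _ (pow_ne_zero _ hd)
        refine (ybe_iff c₁ c₂ _ _ _ _).2
          ⟨mul_right_cancel₀ (pow_ne_zero 2 hd') ?_, mul_right_cancel₀ hd' ?_,
           mul_right_cancel₀ hd' ?_, mul_right_cancel₀ (pow_ne_zero 2 hd) ?_⟩
        · linear_combination (c₁ * ((c₂ ^ 2 / (c₂ - c₁)) * (c₂ - c₁) + c₂ ^ 2)
            - c₁ ^ 2 * (c₂ - c₁)) * hp + c₂ * hab'
        · linear_combination c₁ * a * hp - c₂ * a * hq
        · linear_combination c₁ * b * hp - c₂ * b * hq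
        · linear_combination c₁ * hab' + (c₂ * ((c₁ ^ 2 / (c₁ - c₂)) * (c₁ - c₂) + c₁ ^ 2)
            - c₂ ^ 2 * (c₁ - c₂)) * hq
  refine ⟨?_, hseteq⟩
  rw [hseteq, Nat.card_coe_set_eq, Set.ncard_union_eq ?disj (Set.toFinite _) (Set.toFinite _)]
  case disj =>
    rw [Set.disjoint_left]
    rintro X (rfl | rfl | rfl | rfl) ⟨a, b, ha, hb, hab, hX⟩ <;>
      · have := congrFun (congrFun hX 0) 1
        simp at this
        exact ha this.symm
  have h4 : ({!![0, 0; 0, 0], !![c₁, 0; 0, 0], !![0, 0; 0, c₂], !![c₁, 0; 0, c₂]} :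
      Set (Matrix (Fin 2) (Fin 2) F)).ncard = 4 := by
    have ne01 : (!![0, 0; 0, 0] : Matrix (Fin 2) (Fin 2) F) ≠ !![c₁, 0; 0, 0] := fun h =>
      hc₁ (by simpa using (congrFun (congrFun h 0) 0).symm)
    have ne02 : (!![0, 0; 0, 0] : Matrix (Fin 2) (Fin 2) F) ≠ !![0, 0; 0, c₂] := fun h =>
      hc₂ (by simpa using (congrFun (congrFun h 1) 1).symm)
    have ne03 : (!![0, 0; 0, 0] : Matrix (Fin 2) (Fin 2) F) ≠ !![c₁, 0; 0, c₂] := fun h =>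
      hc₁ (by simpa using (congrFun (congrFun h 0) 0).symm)
    have ne12 : (!![c₁, 0; 0, 0] : Matrix (Fin 2) (Fin 2) F) ≠ !![0, 0; 0, c₂] := fun h =>
      hc₁ (by simpa using congrFun (congrFun h 0) 0)
    have ne13 : (!![c₁, 0; 0, 0] : Matrix (Fin 2) (Fin 2) F) ≠ !![c₁, 0; 0, c₂] := fun h =>
      hc₂ (by simpa using (congrFun (congrFun h 1) 1).symm)
    have ne23 : (!![0, 0; 0, c₂] : Matrix (Fin 2) (Fin 2) F) ≠ !![c₁, 0; 0, c₂] := fun h =>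
      hc₁ (by simpa using (congrFun (congrFun h 0) 0).symm)
    rw [Set.ncard_insert_of_notMem (by simp [ne01, ne02, ne03]) (Set.toFinite _),
      Set.ncard_insert_of_notMem (by simp [ne12, ne13]) (Set.toFinite _),
      Set.ncard_insert_of_notMem (by simp [ne23]) (Set.toFinite _),
      Set.ncard_singleton]
  have hE : {X : Matrix (Fin 2) (Fin 2) F | ∃ a b : F, a ≠ 0 ∧ b ≠ 0 ∧
          a * b = -(c₁ * c₂ * (c₁ ^ 2 - c₁ * c₂ + c₂ ^ 2)) / (c₁ - c₂) ^ 2 ∧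
          X = !![c₂ ^ 2 / (c₂ - c₁), a; b, c₁ ^ 2 / (c₁ - c₂)]} =
      (fun a : F => !![c₂ ^ 2 / (c₂ - c₁), a;
        (-(c₁ * c₂ * (c₁ ^ 2 - c₁ * c₂ + c₂ ^ 2)) / (c₁ - c₂) ^ 2) / a,
        c₁ ^ 2 / (c₁ - c₂)]) '' {a : F | a ≠ 0} := by
    ext X
    simp only [Set.mem_setOf_eq, Set.mem_image]
    constructor
    · rintro ⟨a, b, ha, hb, hab, rfl⟩
      exact ⟨a, ha, by rw [← hab, mul_div_cancel_left₀ _ ha]⟩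
    · rintro ⟨a, ha, rfl⟩
      exact ⟨a, _, ha, div_ne_zero hk ha, mul_div_cancel₀ _ ha, rfl⟩
  have hEcard : {X : Matrix (Fin 2) (Fin 2) F | ∃ a b : F, a ≠ 0 ∧ b ≠ 0 ∧
          a * b = -(c₁ * c₂ * (c₁ ^ 2 - c₁ * c₂ + c₂ ^ 2)) / (c₁ - c₂) ^ 2 ∧
          X = !![c₂ ^ 2 / (c₂ - c₁), a; b, c₁ ^ 2 / (c₁ - c₂)]}.ncard =
      Fintype.card F - 1 := by
    rw [hE, Set.ncard_image_of_injective _ (fun a a' h => by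
      simpa using (congrFun (congrFun h 0) 1))]
    rw [show {a : F | a ≠ 0} = Set.univ \ {0} from by ext; simp,
      Set.ncard_diff (Set.subset_univ _), Set.ncard_singleton, Set.ncard_univ,
      Nat.card_eq_fintype_card]
  rw [h4, hEcard]
  have : 0 < Fintype.card F := Fintype.card_pos
  omega
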